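/- Let σ : X* → M and τ : Y* → M be finite choices of generators for a monoid M. Then there exists a monoid homomorphism ρ : (Y ∪ Ȳ)* → (X ∪ X̄)* commuting with the involutions such that L_τ(M) = ρ⁻¹(L_σ(M)), i.e., the loop problem with respect to τ is an inverse morphic image of the loop problem with respect to σ. -/
import Mathlib


open FreeMonoid

section LoopPrelude

variable {X M : Type*} [Monoid M]

def barW {X : Type*} (w : List (X ⊕ X)) : List (X ⊕ X) := (w.map Sum.swap).reverse

def posW {X : Type*} (u : List X) : List (X ⊕ X) := u.map Sum.inl

def negW {X : Type*} (v : List X) : List (X ⊕ X) := (v.map Sum.inr).reverse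

inductive LStep (σ : FreeMonoid X →* M) : M → (X ⊕ X) → M → Prop
  | posW (a : M) (x : X) : LStep σ a (Sum.inl x) (a * σ (of x))
  | negW (a : M) (x : X) : LStep σ (a * σ (of x)) (Sum.inr x) a

inductive LPath (σ : FreeMonoid X →* M) : M → List (X ⊕ X) → M → Prop
  | nil (a : M) : LPath σ a [] a
  | cons {a b c : M} {l : X ⊕ X} {w : List (X ⊕ X)}
      (h₁ : LStep σ a l b) (h₂ : LPath σ b w c) : LPath σ a (l :: w) c

def LoopProblem (σ : FreeMonoid X →* M) : Set (List (X ⊕ X)) := { w | LPath σ 1 w 1 }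

end LoopPrelude

section SemiPrelude

variable {X S : Type*} [Semigroup S]

def SLoopProblem (f : X → S) : Set (List (X ⊕ X)) :=
  LoopProblem (FreeMonoid.lift (fun x => (f x : WithOne S)))

end SemiPrelude

/-- The bar involution, as a map on the free monoid over X ⊕ X. -/
def barF {X : Type*} (w : FreeMonoid (X ⊕ X)) : FreeMonoid (X ⊕ X) :=
  FreeMonoid.ofList (barW (FreeMonoid.toList w))

section Aux

variable {X M : Type*} [Monoid M]

lemma lpath_append {σ : FreeMonoid X →* M} :
    ∀ {u v : List (X ⊕ X)} {a c : M},
      LPath σ a (u ++ v) c ↔ ∃ b, LPath σ a u b ∧ LPath σ b v c := by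
  intro u
  induction u with
  | nil =>
    intro v a c
    constructor
    · intro h; exact ⟨a, .nil a, h⟩
    · rintro ⟨b, hb, h⟩; cases hb; exact h
  | cons l u ih =>
    intro v a c
    constructor
    · intro h
      cases h with
      | cons h1 h2 =>
        obtain ⟨b, hb1, hb2⟩ := ih.mp h2
        exact ⟨b, .cons h1 hb1, hb2⟩
    · rintro ⟨b, hb, h⟩
      cases hb with
      | cons h1 h2 => exact .cons h1 (ih.mpr ⟨b, h2, h⟩)

lemma lpath_posW {σ : FreeMonoid X →* M} (u : List X) :
    ∀ {a b : M}, LPath σ a (posW u) b ↔ b = a * σ (FreeMonoid.ofList u) := by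
  induction u with
  | nil =>
    intro a b
    constructor
    · intro h; cases h; simp
    · intro h; simp at h; subst h; exact .nil _
  | cons x u ih =>
    intro a b
    constructor
    · intro h
      cases h with
      | cons h1 h2 =>
        cases h1 with
        | posW =>
          rw [ih.mp h2]
          have : (FreeMonoid.ofList (x :: u) : FreeMonoid X) = of x * ofList u := rfl
          rw [this, map_mul, mul_assoc]
    · intro h
      subst h
      have hstep : LStep σ a (Sum.inl x) (a * σ (of x)) := .posW a x
      have : (FreeMonoid.ofList (x :: u) : FreeMonoid X) = of x * ofList u := rfl
      rw [this, map_mul, ← mul_assoc]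
      exact .cons hstep (ih.mpr rfl)

lemma lpath_single_neg {σ : FreeMonoid X →* M} {x : X} {a b : M} :
    LPath σ a [Sum.inr x] b ↔ a = b * σ (of x) := by
  constructor
  · intro h
    cases h with
    | cons h1 h2 =>
      cases h2
      cases h1 with
      | negW => rfl
  · intro h
    subst h
    exact .cons (.negW b x) (.nil b)

lemma lpath_negW {σ : FreeMonoid X →* M} (u : List X) :
    ∀ {a b : M}, LPath σ a (negW u) b ↔ a = b * σ (FreeMonoid.ofList u) := by
  induction u with
  | nil =>
    intro a b
    constructor
    · intro h; cases h; simp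
    · intro h; simp at h; subst h; exact .nil _
  | cons x u ih =>
    intro a b
    have hsplit : negW (x :: u) = negW u ++ [Sum.inr x] := by
      simp [negW]
    rw [hsplit, lpath_append]
    have hml : (FreeMonoid.ofList (x :: u) : FreeMonoid X) = of x * ofList u := rfl
    constructor
    · rintro ⟨c, hc1, hc2⟩
      rw [lpath_single_neg] at hc2
      rw [ih.mp hc1, hc2, hml, map_mul, mul_assoc]
    · intro h
      refine ⟨b * σ (of x), ih.mpr ?_, lpath_single_neg.mpr rfl⟩
      rw [h, hml, map_mul, mul_assoc]

lemma barW_append {X : Type*} (u v : List (X ⊕ X)) :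
    barW (u ++ v) = barW v ++ barW u := by
  simp [barW]

lemma barW_posW {X : Type*} (u : List X) : barW (posW u) = negW u := by
  simp [barW, posW, negW, Function.comp]

lemma barW_negW {X : Type*} (u : List X) : barW (negW u) = posW u := by
  simp [barW, posW, negW, Function.comp]

end Aux

theorem loop_problem_inverse_morphic_image {X Y M : Type*} [Finite X] [Finite Y] [Monoid M]
    (σ : FreeMonoid X →* M) (τ : FreeMonoid Y →* M)
    (hσ : Function.Surjective σ) (hτ : Function.Surjective τ) :
    ∃ ρ : FreeMonoid (Y ⊕ Y) →* FreeMonoid (X ⊕ X),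
      (∀ w : FreeMonoid (Y ⊕ Y), ρ (barF w) = barF (ρ w)) ∧
      ∀ w : List (Y ⊕ Y), w ∈ LoopProblem τ ↔
        FreeMonoid.toList (ρ (FreeMonoid.ofList w)) ∈ LoopProblem σ := by
  classical
  -- choose preimages of the τ-generators under σ
  have hg : ∀ y : Y, ∃ u : FreeMonoid X, σ u = τ (of y) := fun y => hσ (τ (of y))
  set g : Y → FreeMonoid X := fun y => (hg y).choose with hgdef
  have hgsp : ∀ y : Y, σ (g y) = τ (of y) := fun y => (hg y).choose_spec
  -- the morphism ρ
  set ρ : FreeMonoid (Y ⊕ Y) →* FreeMonoid (X ⊕ X) :=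
    FreeMonoid.lift (Sum.elim
      (fun y => FreeMonoid.ofList (posW (FreeMonoid.toList (g y))))
      (fun y => FreeMonoid.ofList (negW (FreeMonoid.toList (g y))))) with hρdef
  have hρinl : ∀ y : Y, ρ (of (Sum.inl y)) = FreeMonoid.ofList (posW (FreeMonoid.toList (g y))) := by
    intro y; simp [hρdef]
  have hρinr : ∀ y : Y, ρ (of (Sum.inr y)) = FreeMonoid.ofList (negW (FreeMonoid.toList (g y))) := by
    intro y; simp [hρdef]
  refine ⟨ρ, ?_, ?_⟩
  · -- commutation with bar
    have hbar_mul : ∀ u v : FreeMonoid (X ⊕ X), barF (u * v) = barF v * barF u := by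
      intro u v
      show FreeMonoid.ofList (barW (FreeMonoid.toList u ++ FreeMonoid.toList v)) = _
      rw [barW_append]; rfl
    have hbar_mulY : ∀ u v : FreeMonoid (Y ⊕ Y), barF (u * v) = barF v * barF u := by
      intro u v
      show FreeMonoid.ofList (barW (FreeMonoid.toList u ++ FreeMonoid.toList v)) = _
      rw [barW_append]; rfl
    have hletter : ∀ l : Y ⊕ Y, ρ (barF (of l)) = barF (ρ (of l)) := by
      intro l
      cases l with
      | inl y =>
        have h1 : barF (of (Sum.inl y) : FreeMonoid (Y ⊕ Y)) = of (Sum.inr y) := rfl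
        rw [h1, hρinr, hρinl]
        show _ = FreeMonoid.ofList (barW (posW (FreeMonoid.toList (g y))))
        rw [barW_posW]
      | inr y =>
        have h1 : barF (of (Sum.inr y) : FreeMonoid (Y ⊕ Y)) = of (Sum.inl y) := rfl
        rw [h1, hρinl, hρinr]
        show _ = FreeMonoid.ofList (barW (negW (FreeMonoid.toList (g y))))
        rw [barW_negW]
    have haux : ∀ w : List (Y ⊕ Y), ρ (barF (FreeMonoid.ofList w)) = barF (ρ (FreeMonoid.ofList w)) := by
      intro w
      induction w with
      | nil =>
        have h1 : barF (FreeMonoid.ofList ([] : List (Y ⊕ Y))) = 1 := rfl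
        have h2 : (FreeMonoid.ofList ([] : List (Y ⊕ Y))) = 1 := rfl
        rw [h1, h2, map_one]
        rfl
      | cons l w ih =>
        have h1 : (FreeMonoid.ofList (l :: w) : FreeMonoid (Y ⊕ Y)) = of l * ofList w := rfl
        rw [h1, hbar_mulY, map_mul, map_mul, hbar_mul, ih, hletter]
    intro w
    have := haux (FreeMonoid.toList w)
    simpa using this
  · -- loop problem preservation
    have key : ∀ (w : List (Y ⊕ Y)) (a b : M),
        LPath τ a w b ↔ LPath σ a (FreeMonoid.toList (ρ (FreeMonoid.ofList w))) b := by
      intro w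
      induction w with
      | nil =>
        intro a b
        have h0 : FreeMonoid.toList (ρ (FreeMonoid.ofList ([] : List (Y ⊕ Y)))) = [] := by
          have : (FreeMonoid.ofList ([] : List (Y ⊕ Y))) = 1 := rfl
          rw [this, map_one]; rfl
        rw [h0]
        constructor
        · intro h; cases h; exact .nil a
        · intro h; cases h; exact .nil a
      | cons l w ih =>
        intro a b
        have h1 : (FreeMonoid.ofList (l :: w) : FreeMonoid (Y ⊕ Y)) = of l * ofList w := rfl
        have h2 : FreeMonoid.toList (ρ (FreeMonoid.ofList (l :: w))) =
            FreeMonoid.toList (ρ (of l)) ++ FreeMonoid.toList (ρ (FreeMonoid.ofList w)) := by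
          rw [h1, map_mul]; rfl
        rw [h2, lpath_append]
        cases l with
        | inl y =>
          have h3 : FreeMonoid.toList (ρ (of (Sum.inl y))) = posW (FreeMonoid.toList (g y)) := by
            rw [hρinl]; rfl
          rw [h3]
          constructor
          · intro h
            cases h with
            | cons h1' h2' =>
              cases h1' with
              | posW =>
                refine ⟨a * τ (of y), ?_, (ih _ _).mp h2'⟩
                rw [lpath_posW]
                have : σ (FreeMonoid.ofList (FreeMonoid.toList (g y))) = τ (of y) := by
                  rw [FreeMonoid.ofList_toList, hgsp]
                rw [this]
          · rintro ⟨c, hc1, hc2⟩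
            rw [lpath_posW] at hc1
            have hcτ : c = a * τ (of y) := by
              rw [hc1, FreeMonoid.ofList_toList, hgsp]
            subst hcτ
            exact .cons (.posW a y) ((ih _ _).mpr hc2)
        | inr y =>
          have h3 : FreeMonoid.toList (ρ (of (Sum.inr y))) = negW (FreeMonoid.toList (g y)) := by
            rw [hρinr]; rfl
          rw [h3]
          constructor
          · intro h
            cases h with
            | @cons _ m _ _ _ h1' h2' =>
              cases h1' with
              | negW =>
                refine ⟨m, ?_, (ih _ _).mp h2'⟩
                rw [lpath_negW, FreeMonoid.ofList_toList, hgsp]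
          · rintro ⟨c, hc1, hc2⟩
            rw [lpath_negW, FreeMonoid.ofList_toList, hgsp] at hc1
            subst hc1
            exact .cons (.negW c y) ((ih _ _).mpr hc2)
    intro w
    exact key w 1 1
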